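/- Let D = ∂_x − y²∂_y be the derivation of k[x,y] over a field k of characteristic zero. Then 1 ∈ Im D, but y ∉ Im D; consequently Im D is not a Mathieu subspace of k[x,y]. -/

import Mathlib

open MvPolynomial

def IsMathieu (k : Type*) {R : Type*} [Field k] [CommRing R] [Algebra k R]
    (M : Submodule k R) : Prop :=
  ∀ a : R, (∀ m : ℕ, 1 ≤ m → a ^ m ∈ M) →
    ∀ b : R, ∃ N : ℕ, ∀ m : ℕ, N ≤ m → b * a ^ m ∈ M

open LaurentPolynomial in
/-- The linear functional `p ↦` (coefficient of `t¹` in `p(t⁻¹, t)`). It vanishes on the image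
of `D = ∂_x − y²∂_y` but not on `y`. -/
noncomputable def lam (k : Type*) [Field k] : MvPolynomial (Fin 2) k →ₗ[k] k where
  toFun p := (aeval ![T (-1), T 1] p : LaurentPolynomial k).coeff 1
  map_add' p q := by simp only [map_add]; exact Finsupp.add_apply _ _ _
  map_smul' c p := by simp only [map_smul, RingHom.id_apply]; exact Finsupp.smul_apply _ _ _

open LaurentPolynomial in
theorem lam_monomial (k : Type*) [Field k] (d : Fin 2 →₀ ℕ) (c : k) :
    lam k (monomial d c) = if (d 1 : ℤ) = d 0 + 1 then c else 0 := by
  show (aeval ![T (-1), T 1] (monomial d c) : LaurentPolynomial k).coeff 1 = _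
  rw [aeval_monomial]
  rw [Finsupp.prod_fintype _ _ (fun i => pow_zero _)]
  rw [Fin.prod_univ_two]
  simp only [Matrix.cons_val_zero, Matrix.cons_val_one, Matrix.head_cons, T_pow, ← T_add]
  rw [show algebraMap k (LaurentPolynomial k) c = LaurentPolynomial.C c from rfl,
    ← single_eq_C_mul_T]
  rw [AddMonoidAlgebra.coeff_single, Finsupp.single_apply]
  split_ifs with h1 h2 h2 <;> first | rfl | (exfalso; omega)

theorem lam_D (k : Type*) [Field k] [CharZero k] (g : MvPolynomial (Fin 2) k) :
    lam k (MvPolynomial.mkDerivation k ![1, -(X 1 ^ 2)] g) = 0 := by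
  induction g using MvPolynomial.induction_on' with
  | add p q hp hq => rw [map_add, map_add, hp, hq, add_zero]
  | monomial d c =>
    rw [mkDerivation_monomial, Finsupp.sum_fintype _ _ (fun i => by simp), Fin.sum_univ_two]
    simp only [Matrix.cons_val_zero, Matrix.cons_val_one, Matrix.head_cons, smul_eq_mul,
      mul_one, mul_neg, X_pow_eq_monomial, monomial_mul, mul_one]
    rw [map_smul, map_add, map_neg, lam_monomial, lam_monomial]
    simp only [Finsupp.tsub_apply, Finsupp.add_apply, Finsupp.single_apply]
    norm_num
    split_ifs with h1 h2 h2
    · have h : d 0 = d 1 := by omega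
      rw [h]; simp
    · have h : d 0 = 0 := by omega
      rw [h]; simp
    · have h : d 1 = 0 := by omega
      rw [h]; simp
    · simp

theorem lam_X1 (k : Type*) [Field k] : lam k (X 1 : MvPolynomial (Fin 2) k) = 1 := by
  rw [X, lam_monomial]
  simp

/-- For `D = ∂_x − y²∂_y` on `k[x,y]` (with `x = X 0`, `y = X 1`): `1 ∈ Im D`,
`y ∉ Im D`, and `Im D` is not a Mathieu subspace. -/
theorem im_not_mathieu (k : Type*) [Field k] [CharZero k] :
    letI D : Derivation k (MvPolynomial (Fin 2) k) (MvPolynomial (Fin 2) k) :=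
      MvPolynomial.mkDerivation k ![1, -(X 1 ^ 2)]
    (1 : MvPolynomial (Fin 2) k) ∈ LinearMap.range D.toLinearMap ∧
    (X 1 : MvPolynomial (Fin 2) k) ∉ LinearMap.range D.toLinearMap ∧
    ¬ IsMathieu k (LinearMap.range D.toLinearMap) := by
  set D : Derivation k (MvPolynomial (Fin 2) k) (MvPolynomial (Fin 2) k) :=
    MvPolynomial.mkDerivation k ![1, -(X 1 ^ 2)] with hD
  have h1 : (1 : MvPolynomial (Fin 2) k) ∈ LinearMap.range D.toLinearMap := by
    refine ⟨X 0, ?_⟩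
    show MvPolynomial.mkDerivation k ![1, -(X 1 ^ 2)] (X 0) = 1
    rw [mkDerivation_X]; rfl
  have h2 : (X 1 : MvPolynomial (Fin 2) k) ∉ LinearMap.range D.toLinearMap := by
    rintro ⟨g, hg⟩
    have : lam k (X 1 : MvPolynomial (Fin 2) k) = 0 := by
      rw [← hg]; exact lam_D k g
    rw [lam_X1] at this
    exact one_ne_zero this
  refine ⟨h1, h2, fun hM => ?_⟩
  obtain ⟨N, hN⟩ := hM 1 (fun m _ => by simpa using h1) (X 1)
  have := hN N le_rfl
  simp only [one_pow, mul_one] at this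
  exact h2 this
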